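/- arXiv:1305.2353 — 4 statements merged into one kernel-verified Lean document; each statement's English description precedes it below -/
import Mathlib

section
/- Let n, p be natural numbers with p ≤ n, let A₀ : Fin n → Fin p → ℝ, let C₀ : Fin p → Fin p → ℝ, and let σ : Fin n → Fin p assign each row index i with p ≤ i to a group. Fix m ≤ p and suppose that for each q < m the matrices A_{q+1} and C_{q+1} are defined from A_q and C_q by the Schur-complement update A_{q+1}(i,k) = A_q(i,k) − A_q(i,q)·A_q(k,q)/A_q(q,q) and the worst-case compressed update C_{q+1}(j,k) = C_q(j,k) + C_q(j,q)·|A_q(k,q)|/|A_q(q,q)|, where each pivot satisfies A_q(q,q) ≠ 0. If initially |A₀(i,k)| ≤ C₀(σ(i),k) for every row i with p ≤ i and every column k, then for every q ≤ m, every row i with p ≤ i, and every column k, |A_q(i,k)| ≤ C_q(σ(i),k). -/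
/-- Lemma 5.1 (SCP1): for a sequence of 1×1 pivots in strict compressed
pivoting, the compressed matrix rows dominate the rows of `A₂₁`
entrywise in absolute value throughout the elimination. -/
theorem strict_compressed_pivoting_domination
    (n p : ℕ) (hpn : p ≤ n)
    (A : ℕ → Fin n → Fin p → ℝ) (C : ℕ → Fin p → Fin p → ℝ)
    (σ : Fin n → Fin p) (m : ℕ) (hm : m ≤ p)
    (hpiv : ∀ q (hq : q < m),
      A q ⟨q, lt_of_lt_of_le (lt_of_lt_of_le hq hm) hpn⟩ ⟨q, lt_of_lt_of_le hq hm⟩ ≠ 0)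
    (hA : ∀ q (hq : q < m), ∀ (i : Fin n) (k : Fin p),
      A (q + 1) i k =
        A q i k -
          A q i ⟨q, lt_of_lt_of_le hq hm⟩ *
            A q ⟨k, lt_of_lt_of_le k.2 hpn⟩ ⟨q, lt_of_lt_of_le hq hm⟩ /
              A q ⟨q, lt_of_lt_of_le (lt_of_lt_of_le hq hm) hpn⟩ ⟨q, lt_of_lt_of_le hq hm⟩)
    (hC : ∀ q (hq : q < m), ∀ (j k : Fin p),
      C (q + 1) j k =
        C q j k +
          C q j ⟨q, lt_of_lt_of_le hq hm⟩ *
            |A q ⟨k, lt_of_lt_of_le k.2 hpn⟩ ⟨q, lt_of_lt_of_le hq hm⟩| /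
              |A q ⟨q, lt_of_lt_of_le (lt_of_lt_of_le hq hm) hpn⟩ ⟨q, lt_of_lt_of_le hq hm⟩|)
    (hinit : ∀ (i : Fin n), p ≤ (i : ℕ) → ∀ (k : Fin p), |A 0 i k| ≤ C 0 (σ i) k) :
    ∀ q ≤ m, ∀ (i : Fin n), p ≤ (i : ℕ) → ∀ (k : Fin p),
      |A q i k| ≤ C q (σ i) k := by
  intro q
  induction q with
  | zero => intro _ i hi k; exact hinit i hi k
  | succ q ih =>
    intro hq i hi k
    have hqm : q < m := hq
    rw [hA q hqm i k, hC q hqm (σ i) k]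
    have h1 := ih (le_of_lt hqm) i hi k
    have h2 := ih (le_of_lt hqm) i hi ⟨q, lt_of_lt_of_le hqm hm⟩
    have hpos : 0 < |A q ⟨q, lt_of_lt_of_le (lt_of_lt_of_le hqm hm) hpn⟩ ⟨q, lt_of_lt_of_le hqm hm⟩| :=
      abs_pos.mpr (hpiv q hqm)
    calc |A q i k - A q i ⟨q, lt_of_lt_of_le hqm hm⟩ *
            A q ⟨k, lt_of_lt_of_le k.2 hpn⟩ ⟨q, lt_of_lt_of_le hqm hm⟩ /
              A q ⟨q, lt_of_lt_of_le (lt_of_lt_of_le hqm hm) hpn⟩ ⟨q, lt_of_lt_of_le hqm hm⟩|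
        ≤ |A q i k| + |A q i ⟨q, lt_of_lt_of_le hqm hm⟩| *
            |A q ⟨k, lt_of_lt_of_le k.2 hpn⟩ ⟨q, lt_of_lt_of_le hqm hm⟩| /
              |A q ⟨q, lt_of_lt_of_le (lt_of_lt_of_le hqm hm) hpn⟩ ⟨q, lt_of_lt_of_le hqm hm⟩| := by
          rw [← abs_mul, ← abs_div]
          exact abs_sub _ _
      _ ≤ C q (σ i) k + C q (σ i) ⟨q, lt_of_lt_of_le hqm hm⟩ *
            |A q ⟨k, lt_of_lt_of_le k.2 hpn⟩ ⟨q, lt_of_lt_of_le hqm hm⟩| /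
              |A q ⟨q, lt_of_lt_of_le (lt_of_lt_of_le hqm hm) hpn⟩ ⟨q, lt_of_lt_of_le hqm hm⟩| := by
          gcongr
end

section
/- Let u be a real number with 0 < u ≤ 1/2, and let d, γ, μ, x, v, w be real numbers with d ≠ 0, γ ≥ 0, |d| ≥ u·γ, |v| ≤ γ, |w| ≤ γ, |x| ≤ μ, and γ ≤ μ. Then the updated entry after a 1×1 pivot satisfies |x − v·w/d| ≤ μ·(1 + u⁻¹), and the corresponding entry of the factor L satisfies |v/d| ≤ u⁻¹. -/
/-- Theorem 5.2 (SCP2), 1×1-pivot case, stated per entry: if the pivot `d`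
passes the threshold test `|d| ≥ u·γ`, then the updated entry is bounded by
`μ(1 + u⁻¹)` and the entry of `L` is bounded by `u⁻¹`. -/
theorem scp2_one_by_one_pivot
    (u d γ μ x v w : ℝ) (hu : 0 < u) (hu2 : u ≤ 1 / 2)
    (hd : d ≠ 0) (hγ : 0 ≤ γ) (hthresh : |d| ≥ u * γ)
    (hv : |v| ≤ γ) (hw : |w| ≤ γ) (hx : |x| ≤ μ) (hγμ : γ ≤ μ) :
    |x - v * w / d| ≤ μ * (1 + u⁻¹) ∧ |v / d| ≤ u⁻¹ := by
  have hdpos : 0 < |d| := abs_pos.mpr hd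
  have hμ : 0 ≤ μ := le_trans hγ hγμ
  have hL : |v / d| ≤ u⁻¹ := by
    rw [abs_div, div_le_iff₀ hdpos]
    calc |v| ≤ γ := hv
      _ = u⁻¹ * (u * γ) := by field_simp
      _ ≤ u⁻¹ * |d| := by
        apply mul_le_mul_of_nonneg_left hthresh (by positivity)
  have hvw : |v * w / d| ≤ μ * u⁻¹ := by
    rcases eq_or_lt_of_le hγ with h0 | hγpos
    · have hv0 : v = 0 := by
        have : |v| ≤ 0 := by rw [h0]; exact hv
        simpa using le_antisymm this (abs_nonneg v)
      simp [hv0]; positivity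
    · rw [abs_div, abs_mul, div_le_iff₀ hdpos]
      calc |v| * |w| ≤ γ * γ := by
            exact mul_le_mul hv hw (abs_nonneg w) hγ
        _ = μ * u⁻¹ * (u * γ) * (γ / μ) := by
            have hμpos : (0:ℝ) < μ := lt_of_lt_of_le hγpos hγμ
            field_simp
        _ ≤ μ * u⁻¹ * |d| * 1 := by
            apply mul_le_mul
            · exact mul_le_mul_of_nonneg_left hthresh (by positivity)
            · rw [div_le_one (lt_of_lt_of_le hγpos hγμ)]; exact hγμ
            · positivity
            · positivity
        _ = μ * u⁻¹ * |d| := by ring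
  refine ⟨?_, hL⟩
  calc |x - v * w / d| ≤ |x| + |v * w / d| := abs_sub _ _
    _ ≤ μ + μ * u⁻¹ := add_le_add hx hvw
    _ = μ * (1 + u⁻¹) := by ring
end

section
/- Let u > 0, let D be an invertible 2×2 real matrix, and let γ : Fin 2 → ℝ be nonnegative with Σ_s |D⁻¹(r,s)|·γ(s) ≤ u⁻¹ for each r ∈ Fin 2. Let x, μ be real numbers and v, w : Fin 2 → ℝ be such that |v(s)| ≤ γ(s) for each s, |w(r)| ≤ μ for each r, |x| ≤ μ, and μ ≥ 0. Then |x − Σ_{r,s} w(r)·D⁻¹(r,s)·v(s)| ≤ μ·(1 + 2u⁻¹). -/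
open Matrix BigOperators

/-- Theorem 5.2 (SCP2), 2×2-pivot growth bound, stated per entry. -/
theorem scp2_two_by_two_growth
    (u : ℝ) (hu : 0 < u)
    (D : Matrix (Fin 2) (Fin 2) ℝ) (hD : IsUnit D.det)
    (γ : Fin 2 → ℝ) (hγ : ∀ s, 0 ≤ γ s)
    (hthresh : ∀ r, ∑ s, |D⁻¹ r s| * γ s ≤ u⁻¹)
    (x μ : ℝ) (v w : Fin 2 → ℝ)
    (hv : ∀ s, |v s| ≤ γ s) (hw : ∀ r, |w r| ≤ μ)
    (hx : |x| ≤ μ) (hμ : 0 ≤ μ) :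
    |x - ∑ r, ∑ s, w r * D⁻¹ r s * v s| ≤ μ * (1 + 2 * u⁻¹) := by
  have hrow : ∀ r, |∑ s, w r * D⁻¹ r s * v s| ≤ μ * u⁻¹ := by
    intro r
    calc |∑ s, w r * D⁻¹ r s * v s| ≤ ∑ s, |w r * D⁻¹ r s * v s| :=
          Finset.abs_sum_le_sum_abs _ _
      _ = ∑ s, |w r| * (|D⁻¹ r s| * |v s|) := by
          simp [abs_mul, mul_assoc]
      _ ≤ ∑ s, μ * (|D⁻¹ r s| * γ s) := by
          apply Finset.sum_le_sum
          intro s _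
          exact mul_le_mul (hw r) (mul_le_mul_of_nonneg_left (hv s) (abs_nonneg _))
            (mul_nonneg (abs_nonneg _) (abs_nonneg _)) hμ
      _ = μ * ∑ s, |D⁻¹ r s| * γ s := by rw [Finset.mul_sum]
      _ ≤ μ * u⁻¹ := mul_le_mul_of_nonneg_left (hthresh r) hμ
  calc |x - ∑ r, ∑ s, w r * D⁻¹ r s * v s|
      ≤ |x| + |∑ r, ∑ s, w r * D⁻¹ r s * v s| := abs_sub _ _
    _ ≤ μ + ∑ r, |∑ s, w r * D⁻¹ r s * v s| :=
        add_le_add hx (Finset.abs_sum_le_sum_abs _ _)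
    _ ≤ μ + ∑ _r : Fin 2, μ * u⁻¹ :=
        add_le_add le_rfl (Finset.sum_le_sum fun r _ => hrow r)
    _ = μ * (1 + 2 * u⁻¹) := by simp [Fin.sum_univ_two]; ring
end

section
/- Let u and ε be real numbers with 0 < u ≤ 1/2 and 0 < ε < 1/(2u). Let A be the 5×2 real matrix whose rows are (1, −1), (−1, 2), (u⁻¹, 0), (0, u⁻¹), (u⁻¹ − ε, u⁻¹ − ε). Perform two steps of symmetric Gaussian elimination with 1×1 diagonal pivots: set l(i,1) = A(i,1)/A(1,1) for i ≥ 1, A'(i,2) = A(i,2) − A(i,1)·A(2,1)/A(1,1) for i ≥ 2, and l(i,2) = A'(i,2)/A'(2,2) for i ≥ 2. Then: (i) A'(2,2) = 1; (ii) both pivots pass the threshold test with respect to rows 2–4 only, i.e. |A(1,1)| ≥ u · max(|A(2,1)|, |A(3,1)|, |A(4,1)|) and |A'(2,2)| ≥ u · max(|A'(3,2)|, |A'(4,2)|); yet (iii) l(5,2) = 2(u⁻¹ − ε) > u⁻¹. -/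
open Matrix

/-- The explicit counterexample in Section 5 of the paper showing that relaxed
compressed pivoting does not bound the entries of the factor `L` by `u⁻¹`. -/
theorem relaxed_compressed_counterexample
    (u ε : ℝ) (hu : 0 < u) (hu2 : u ≤ 1 / 2) (hε : 0 < ε) (hε2 : ε < 1 / (2 * u))
    (A : Matrix (Fin 5) (Fin 2) ℝ)
    (hA : A = !![1, -1; -1, 2; u⁻¹, 0; 0, u⁻¹; u⁻¹ - ε, u⁻¹ - ε])
    (l₁ : Fin 5 → ℝ) (hl₁ : ∀ i, l₁ i = A i 0 / A 0 0)
    (A' : Fin 5 → ℝ) (hA' : ∀ i, A' i = A i 1 - A i 0 * A 1 0 / A 0 0)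
    (l₂ : Fin 5 → ℝ) (hl₂ : ∀ i, l₂ i = A' i / A' 1) :
    A' 1 = 1 ∧
    |A 0 0| ≥ u * max (|A 1 0|) (max (|A 2 0|) (|A 3 0|)) ∧
    |A' 1| ≥ u * max (|A' 2|) (|A' 3|) ∧
    l₂ 4 = 2 * (u⁻¹ - ε) ∧ l₂ 4 > u⁻¹ := by
  have hu' : (0:ℝ) < u⁻¹ := inv_pos.mpr hu
  have h1 : A' 1 = 1 := by simp [hA', hA]; ring
  have h2 : A' 2 = u⁻¹ := by simp [hA', hA]
  have h3 : A' 3 = u⁻¹ := by simp [hA', hA]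
  have h4 : A' 4 = 2 * (u⁻¹ - ε) := by simp [hA', hA]; ring
  have hl24 : l₂ 4 = 2 * (u⁻¹ - ε) := by rw [hl₂, h1, h4, div_one]
  have huinv : u * u⁻¹ = 1 := mul_inv_cancel₀ hu.ne'
  refine ⟨h1, ?_, ?_, hl24, ?_⟩
  · rw [hA]
    simp
    rw [abs_of_pos hu]
    have h2u : (1:ℝ) ≤ u⁻¹ := by
      rw [le_inv_comm₀ one_pos hu]; linarith
    rw [max_eq_right h2u, huinv]
  · rw [h1, h2, h3, abs_one, abs_of_pos hu', max_self, huinv]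
  · rw [hl24]
    have : ε < u⁻¹ / 2 := by
      calc ε < 1 / (2 * u) := hε2
      _ = u⁻¹ / 2 := by field_simp
    linarith
end
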